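/- Suppose δ ∈ Deco(p,q) ends with '+' in its rightmost entry. Then there exists a unique δ' ∈ Deco(p-1,q) and a unique coherent signature [δδ']: namely, replace each '+' of δ by '+⊕' and each '-' by '⊖-' and delete the final '⊕'. -/

import Mathlib

/-- The four symbols occurring in a GGP signature: `P` = '+', `M` = '-' (for the big
group), `OP` = '⊕', `OM` = '⊖' (for the small group). -/
inductive GSym : Type
  | P | M | OP | OM
  deriving DecidableEq, BEq

open GSym

/-- The list of adjacent pairs allowed in a GGP interleaving pattern. -/
def allowed (a b : GSym) : Prop :=
  (a, b) ∈ ([(OP, P), (P, OP), (M, OM), (OM, M), (P, M), (M, P), (OP, OM), (OM, OP)] :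
    List (GSym × GSym))

/-- `w` is a GGP interleaving pattern for `(Deco(p,q), Deco(p-1,q))`: a word in the four
symbols with `p` '+', `q` '-', `p-1` '⊕', `q` '⊖', all of whose adjacent pairs are
allowed. -/
def IsGGP (p q : ℕ) (w : List GSym) : Prop :=
  w.count P = p ∧ w.count M = q ∧ w.count OP = p - 1 ∧ w.count OM = q ∧ w.Chain' allowed

/-- One step of the weak reduction: delete a leading `+⊕` or a leading `⊖-`. -/
inductive StepW : List GSym → List GSym → Prop
  | po (l : List GSym) : StepW (P :: OP :: l) l
  | om (l : List GSym) : StepW (OM :: M :: l) l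

/-- One step of the strong reduction: additionally allow deleting a trailing `⊕+`. -/
inductive StepS : List GSym → List GSym → Prop
  | po (l : List GSym) : StepS (P :: OP :: l) l
  | om (l : List GSym) : StepS (OM :: M :: l) l
  | op (l : List GSym) : StepS (l ++ [OP, P]) l

/-- Coherence: the signature reduces to the single symbol '+' under the weak reduction. -/
def Coherent (w : List GSym) : Prop :=
  Relation.ReflTransGen StepW w [P]

/-- The degree `q(δ)` of a decoration written as a boolean list (`true` = '+'/'⊕',
`false` = '-'/'⊖'): the number of pairs with a `true` strictly to the left of a
`false`. -/
def qdeg : List Bool → ℕ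
  | [] => 0
  | true :: l => l.count false + qdeg l
  | false :: l => qdeg l

/-- The decoration `δ` of the big group extracted from a signature: the subword of
symbols `+`, `-`, recorded as booleans (`true` = '+'). -/
def unprimed (w : List GSym) : List Bool :=
  (w.filter fun s => match s with | GSym.P => true | GSym.M => true | _ => false).map
    fun s => match s with | GSym.P => true | _ => false

/-- The decoration `δ'` of the small group extracted from a signature: the subword of
symbols `⊕`, `⊖`, recorded as booleans (`true` = '⊕'). -/
def primed (w : List GSym) : List Bool :=
  (w.filter fun s => match s with | GSym.OP => true | GSym.OM => true | _ => false).map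
    fun s => match s with | GSym.OP => true | _ => false

/-- The expansion of a boolean decoration into a signature: each '+' (`true`) is replaced
by `+⊕` and each '-' (`false`) by `⊖-`. -/
def expand : List Bool → List GSym
  | [] => []
  | true :: l => GSym.P :: GSym.OP :: expand l
  | false :: l => GSym.OM :: GSym.M :: expand l


lemma expand_append (a b : List Bool) : expand (a ++ b) = expand a ++ expand b := by
  induction a with
  | nil => rfl
  | cons x l ih => cases x <;> simp [expand, ih]

lemma unprimed_append (a b : List GSym) :
    unprimed (a ++ b) = unprimed a ++ unprimed b := by
  simp [unprimed]

lemma unprimed_expand (l : List Bool) : unprimed (expand l) = l := by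
  induction l with
  | nil => rfl
  | cons x l ih => cases x <;> simpa [expand, unprimed, List.filter] using ih

lemma coherent_iff (w : List GSym) : Coherent w ↔ ∃ l : List Bool, w = expand l ++ [P] := by
  constructor
  · intro h
    induction h using Relation.ReflTransGen.head_induction_on with
    | refl => exact ⟨[], rfl⟩
    | head hstep _ ih =>
      obtain ⟨l, rfl⟩ := ih
      cases hstep with
      | po _ => exact ⟨true :: l, rfl⟩
      | om _ => exact ⟨false :: l, rfl⟩
  · rintro ⟨l, rfl⟩
    induction l with
    | nil => exact Relation.ReflTransGen.refl
    | cons x l ih =>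
      cases x
      · exact Relation.ReflTransGen.head (StepW.om _) ih
      · exact Relation.ReflTransGen.head (StepW.po _) ih

lemma count_expand (l : List Bool) :
    (expand l).count P = l.count true ∧ (expand l).count M = l.count false ∧
    (expand l).count OP = l.count true ∧ (expand l).count OM = l.count false := by
  induction l with
  | nil => simp [expand]
  | cons x l ih =>
    obtain ⟨h1, h2, h3, h4⟩ := ih
    cases x <;>
      simp (config := { decide := true }) [expand, List.count_cons, h1, h2, h3, h4]

lemma chain_expand (l : List Bool) :
    (expand l ++ [P]).Chain' allowed ∧
    ∀ a : GSym, a = OP ∨ a = M → (a :: (expand l ++ [P])).Chain' allowed := by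
  induction l with
  | nil =>
    refine ⟨List.isChain_singleton P, ?_⟩
    rintro a (rfl | rfl) <;>
      exact List.isChain_cons_cons.mpr ⟨by simp [allowed], List.isChain_singleton _⟩
  | cons x l ih =>
    cases x
    · refine ⟨?_, ?_⟩
      · show (OM :: M :: (expand l ++ [P])).Chain' allowed
        exact List.isChain_cons_cons.mpr ⟨by simp [allowed], ih.2 M (Or.inr rfl)⟩
      · rintro a (rfl | rfl) <;>
        · show (_ :: OM :: M :: (expand l ++ [P])).Chain' allowed
          exact List.isChain_cons_cons.mpr ⟨by simp [allowed],
            List.isChain_cons_cons.mpr ⟨by simp [allowed], ih.2 M (Or.inr rfl)⟩⟩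
    · refine ⟨?_, ?_⟩
      · show (P :: OP :: (expand l ++ [P])).Chain' allowed
        exact List.isChain_cons_cons.mpr ⟨by simp [allowed], ih.2 OP (Or.inl rfl)⟩
      · rintro a (rfl | rfl) <;>
        · show (_ :: P :: OP :: (expand l ++ [P])).Chain' allowed
          exact List.isChain_cons_cons.mpr ⟨by simp [allowed],
            List.isChain_cons_cons.mpr ⟨by simp [allowed], ih.2 OP (Or.inl rfl)⟩⟩

/-- Suppose `δ ∈ Deco(p,q)` ends with '+'.  Then there is a unique coherent signature
`[δδ']` with `δ' ∈ Deco(p-1,q)`: namely, replace each '+' of `δ` by `+⊕` and each '-'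
by `⊖-`, then delete the final `⊕`. -/
theorem unique_coherent_signature_of_deco (p q : ℕ) (δ : List Bool)
    (hp : δ.count true = p) (hq : δ.count false = q) (hlast : δ.getLast? = some true) :
    ∀ w : List GSym,
      (IsGGP p q w ∧ unprimed w = δ ∧ Coherent w) ↔ w = (expand δ).dropLast := by
  have hne : δ ≠ [] := by rintro rfl; simp at hlast
  obtain ⟨δ₀, hδ⟩ : ∃ δ₀, δ = δ₀ ++ [true] := by
    refine ⟨δ.dropLast, ?_⟩
    have := List.dropLast_append_getLast hne
    rw [List.getLast?_eq_getLast hne] at hlast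
    rw [Option.some_inj] at hlast
    rw [hlast] at this
    exact this.symm
  subst hδ
  have hdrop : (expand (δ₀ ++ [true])).dropLast = expand δ₀ ++ [P] := by
    rw [expand_append, show expand [true] = [P, OP] from rfl,
      show expand δ₀ ++ [P, OP] = (expand δ₀ ++ [P]) ++ [OP] by simp,
      List.dropLast_concat]
  intro w
  rw [hdrop]
  constructor
  · rintro ⟨_, hu, hc⟩
    obtain ⟨l, rfl⟩ := (coherent_iff w).mp hc
    rw [unprimed_append, unprimed_expand] at hu
    have : unprimed [P] = [true] := rfl
    rw [this] at hu
    have hl : l = δ₀ := by simpa using congrArg List.dropLast hu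
    rw [hl]
  · rintro rfl
    obtain ⟨h1, h2, h3, h4⟩ := count_expand δ₀
    refine ⟨⟨?_, ?_, ?_, ?_, (chain_expand δ₀).1⟩, ?_, (coherent_iff _).mpr ⟨δ₀, rfl⟩⟩
    · simp (config := { decide := true }) [List.count_append, h1, ← hp, List.count_cons]
    · simp (config := { decide := true }) [List.count_append, h2, ← hq, List.count_cons]
    · simp (config := { decide := true }) [List.count_append, h3, ← hp, List.count_cons]
    · simp (config := { decide := true }) [List.count_append, h4, ← hq, List.count_cons]
    · rw [unprimed_append, unprimed_expand]; rfl
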